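/- Let V be an N-dimensional space of functions on D ⊆ ℝ^d with basis v_1, …, v_N, let μ and ρ be probability measures on D with ρ ≪ μ, and suppose every nonzero v ∈ V satisfies μ(v^{-1}(0)) = 0. Let X_1, …, X_N be independent random variables each distributed according to ρ, and let V̂ be the N×N random matrix with entries V̂_{i,j} = v_j(X_i). Then Pr[det V̂ = 0] = 0, i.e., V̂ is invertible almost surely. -/

import Mathlib

open MeasureTheory ProbabilityTheory Matrix

namespace Stmt4Aux

variable {α : Type*} [MeasurableSpace α]

noncomputable def gram {N : ℕ} (v : Fin N → α → ℝ) {k : ℕ} (y : Fin k → α) : ℝ :=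
  ((Matrix.of fun i j => v j (y i)) * (Matrix.of fun i j => v j (y i))ᵀ).det

lemma gram_eq_zero_iff {N k : ℕ} (v : Fin N → α → ℝ) (y : Fin k → α) :
    gram v y = 0 ↔ ¬ LinearIndependent ℝ (fun i (j : Fin N) => v j (y i)) := by
  classical
  set M : Matrix (Fin k) (Fin N) ℝ := Matrix.of fun i j => v j (y i) with hM
  have hMv : ∀ c : Fin k → ℝ, Mᵀ *ᵥ c = (∑ i, c i • fun j : Fin N => v j (y i)) := by
    intro c; funext j
    simp [hM, Matrix.mulVec, dotProduct, Finset.sum_apply, mul_comm]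
  have key : ∀ c : Fin k → ℝ, (M * Mᵀ) *ᵥ c = 0 ↔ Mᵀ *ᵥ c = 0 := by
    intro c
    constructor
    · intro h
      have h2 : c ⬝ᵥ ((M * Mᵀ) *ᵥ c) = (Mᵀ *ᵥ c) ⬝ᵥ (Mᵀ *ᵥ c) := by
        rw [← Matrix.mulVec_mulVec, Matrix.dotProduct_mulVec, ← Matrix.mulVec_transpose]
      rw [h, dotProduct_zero] at h2
      exact dotProduct_self_eq_zero.mp h2.symm
    · intro h
      rw [← Matrix.mulVec_mulVec, h, Matrix.mulVec_zero]
  have hgram : gram v y = (M * Mᵀ).det := rfl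
  rw [hgram, ← Matrix.exists_mulVec_eq_zero_iff, Fintype.not_linearIndependent_iff]
  constructor
  · rintro ⟨c, hc0, hc⟩
    exact ⟨c, by rw [← hMv c]; exact (key c).mp hc, Function.ne_iff.mp hc0⟩
  · rintro ⟨g, hg, i, hgi⟩
    exact ⟨g, fun h0 => hgi (congrFun h0 i), (key g).mpr (by rw [hMv g]; exact hg)⟩

lemma measurable_gram {N k : ℕ} (v : Fin N → α → ℝ) (hv : ∀ i, Measurable (v i)) :
    Measurable fun y : Fin k → α => gram v y := by
  unfold gram
  simp_rw [Matrix.det_apply, Matrix.mul_apply, Units.smul_def, zsmul_eq_mul, Matrix.of_apply,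
    Matrix.transpose_apply]
  refine Finset.measurable_sum _ fun σ _ => Measurable.const_mul ?_ _
  refine Finset.measurable_prod _ fun i _ => Finset.measurable_sum _ fun j _ => ?_
  exact ((hv j).comp (measurable_pi_apply _)).mul ((hv j).comp (measurable_pi_apply _))

lemma measurable_detmat {N : ℕ} (v : Fin N → α → ℝ) (hv : ∀ i, Measurable (v i)) :
    Measurable fun y : Fin N → α => (Matrix.of fun i j => v j (y i)).det := by
  simp_rw [Matrix.det_apply, Units.smul_def, zsmul_eq_mul, Matrix.of_apply]
  refine Finset.measurable_sum _ fun σ _ => Measurable.const_mul ?_ _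
  exact Finset.measurable_prod _ fun i _ => (hv i).comp (measurable_pi_apply _)

lemma mem_span_null (μ : Measure α) {N : ℕ} (v : Fin N → α → ℝ)
    (hμZC : ∀ c : Fin N → ℝ, c ≠ 0 → μ {x | ∑ i, c i * v i x = 0} = 0)
    {W : Submodule ℝ (Fin N → ℝ)} (hW : W ≠ ⊤) :
    μ {x | (fun j => v j x) ∈ W} = 0 := by
  classical
  obtain ⟨f, hf0, hfW⟩ :=
    W.exists_dual_map_eq_bot_of_lt_top (lt_top_iff_ne_top.2 hW) inferInstance
  set c : Fin N → ℝ := fun i => f (fun j => if i = j then 1 else 0) with hc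
  have hfx : ∀ x : Fin N → ℝ, f x = ∑ i, x i * c i := by
    intro x
    rw [LinearMap.pi_apply_eq_sum_univ f x]
    simp [hc, smul_eq_mul]
  have hcne : c ≠ 0 := by
    intro h
    apply hf0
    refine LinearMap.ext fun x => ?_
    rw [hfx x, h]
    simp
  refine measure_mono_null ?_ (hμZC c hcne)
  intro x hx
  simp only [Set.mem_setOf_eq] at hx ⊢
  have hmem : f (fun j => v j x) ∈ W.map f := Submodule.mem_map_of_mem hx
  rw [hfW, Submodule.mem_bot] at hmem
  rw [hfx] at hmem
  rw [← hmem]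
  exact Finset.sum_congr rfl fun i _ => mul_comm _ _

lemma gram_null (μ ρ : Measure α) [IsProbabilityMeasure ρ] (hac : ρ ≪ μ)
    {N : ℕ} (v : Fin N → α → ℝ) (hv : ∀ i, Measurable (v i))
    (hμZC : ∀ c : Fin N → ℝ, c ≠ 0 → μ {x | ∑ i, c i * v i x = 0} = 0) :
    ∀ k : ℕ, k ≤ N → Measure.pi (fun _ : Fin k => ρ) {y | gram v y = 0} = 0 := by
  intro k
  induction k with
  | zero =>
    intro _
    have h0 : {y : Fin 0 → α | gram v y = 0} = ∅ := by
      ext y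
      simp [gram, Matrix.det_isEmpty]
    simp [h0]
  | succ k ih =>
    intro hk
    have hkN : k < N := lt_of_lt_of_le (Nat.lt_succ_self k) hk
    set π := Measure.pi (fun _ : Fin k => ρ) with hπ
    have hmp := measurePreserving_piFinSuccAbove (fun _ : Fin (k + 1) => ρ) 0
    set e := MeasurableEquiv.piFinSuccAbove (fun _ : Fin (k + 1) => α) 0 with he
    have hconsmeas : Measurable fun p : α × (Fin k → α) => (Fin.cons p.1 p.2 : Fin (k+1) → α) := by
      refine measurable_pi_iff.2 fun i => ?_
      refine Fin.cases ?_ (fun j => ?_) i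
      · simpa using measurable_fst
      · simp only [Fin.cons_succ]; exact (measurable_pi_apply j).comp measurable_snd
    set T : Set (α × (Fin k → α)) := {p | gram v (Fin.cons p.1 p.2) = 0} with hT
    have hTmeas : MeasurableSet T :=
      ((measurable_gram v hv).comp hconsmeas) (measurableSet_singleton 0)
    have hpre : {y : Fin (k + 1) → α | gram v y = 0} = e ⁻¹' T := by
      ext x
      have hx : (Fin.cons (e x).1 (e x).2 : Fin (k + 1) → α) = x := by
        funext i
        refine Fin.cases ?_ (fun j => ?_) i
        · simp [he, MeasurableEquiv.piFinSuccAbove]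
        · simp [he, MeasurableEquiv.piFinSuccAbove, Fin.zero_succAbove, Fin.tail]
      simp only [Set.mem_preimage, hT, Set.mem_setOf_eq, hx]
    rw [hpre, hmp.measure_preimage_equiv]
    set B : Set (Fin k → α) := {y | gram v y = 0} with hB
    have hBmeas : MeasurableSet B := (measurable_gram v hv) (measurableSet_singleton 0)
    set T2 : Set (α × (Fin k → α)) := {p | p.2 ∉ B} ∩ T with hT2
    have hT2meas : MeasurableSet T2 := (hBmeas.preimage measurable_snd).compl.inter hTmeas
    have hsub : T ⊆ (Set.univ ×ˢ B) ∪ T2 := by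
      intro p hp
      by_cases h : p.2 ∈ B
      · exact Or.inl ⟨trivial, h⟩
      · exact Or.inr ⟨h, hp⟩
    refine measure_mono_null hsub (measure_union_null ?_ ?_)
    · rw [Measure.prod_prod, ih (le_of_lt hkN), mul_zero]
    · have hswap : (ρ.prod π) T2 = (π.prod ρ) (Prod.swap ⁻¹' T2) := by
        rw [← Measure.prod_swap, Measure.map_apply measurable_swap hT2meas]
      rw [hswap, Measure.measure_prod_null (measurable_swap hT2meas)]
      refine Filter.Eventually.of_forall fun y => ?_
      by_cases hy : gram v y = 0
      · have hemp : (Prod.mk y ⁻¹' (Prod.swap ⁻¹' T2)) = ∅ := by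
          ext a
          simp [hT2, hB, hy]
        simp [hemp]
      · have hind : LinearIndependent ℝ (fun i (j : Fin N) => v j (y i)) := by
          by_contra h
          exact hy ((gram_eq_zero_iff v y).2 h)
        set W := Submodule.span ℝ (Set.range fun i (j : Fin N) => v j (y i)) with hW
        have hWne : W ≠ ⊤ := by
          refine (span_lt_top_of_card_lt_finrank ?_).ne
          calc (Set.range fun i (j : Fin N) => v j (y i)).toFinset.card
              ≤ k := by
                rw [Set.toFinset_range]
                exact (Finset.card_image_le).trans (by simp)
            _ < N := hkN
            _ = Module.finrank ℝ (Fin N → ℝ) := by simp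
        refine measure_mono_null ?_ (hac (mem_span_null μ v hμZC hWne))
        intro a ha
        simp only [Set.mem_preimage, hT2, hT, hB, Set.mem_inter_iff, Set.mem_setOf_eq,
          Prod.swap_prod_mk] at ha
        have hdep := (gram_eq_zero_iff v (Fin.cons a y : Fin (k+1) → α)).1 ha.2
        have hrows : (fun i (j : Fin N) => v j ((Fin.cons a y : Fin (k+1) → α) i))
            = Fin.cons (fun j => v j a) (fun i (j : Fin N) => v j (y i)) := by
          funext i
          refine Fin.cases ?_ (fun j => ?_) i <;> simp
        rw [hrows, linearIndependent_fin_cons, not_and_or] at hdep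
        rcases hdep with h1 | h2
        · exact absurd hind h1
        · simpa [hW] using not_not.mp h2

end Stmt4Aux

open scoped BigOperators ENNReal

/-- Let `V` be an `N`-dimensional space of functions on `D ⊆ ℝ^d`
spanned by `v 0, …, v (N-1)`, let `μ, ρ` be probability measures on `D` with `ρ ≪ μ`,
and suppose every nonzero element of `V` vanishes on a `μ`-null set only.  If
`X 0, …, X (N-1)` are i.i.d. samples from `ρ`, then the random alternant matrix
`(v j (X i))_{i,j}` is singular with probability zero. -/
theorem stmt4 {d N : ℕ} {Ω : Type*} [MeasurableSpace Ω]
    (P : Measure Ω) [IsProbabilityMeasure P]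
    (D : Set (EuclideanSpace ℝ (Fin d)))
    (μ ρ : Measure (EuclideanSpace ℝ (Fin d)))
    [IsProbabilityMeasure μ] [IsProbabilityMeasure ρ]
    (hμD : μ Dᶜ = 0) (hρD : ρ Dᶜ = 0) (hac : ρ ≪ μ)
    (v : Fin N → EuclideanSpace ℝ (Fin d) → ℝ)
    (hmeas : ∀ i, Measurable (v i))
    (hindep : LinearIndependent ℝ v)
    (hμZC : ∀ c : Fin N → ℝ, c ≠ 0 → μ {x | ∑ i, c i * v i x = 0} = 0)
    (X : Fin N → Ω → EuclideanSpace ℝ (Fin d))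
    (hXmeas : ∀ i, Measurable (X i))
    (hXindep : iIndepFun X P)
    (hXdist : ∀ i, P.map (X i) = ρ) :
    P {ω | (Matrix.of fun i j : Fin N => v j (X i ω)).det = 0} = 0 := by
  classical
  have hJ : Measurable fun ω (i : Fin N) => X i ω := measurable_pi_lambda _ hXmeas
  have hdet : Measurable fun x : Fin N → EuclideanSpace ℝ (Fin d) =>
      (Matrix.of fun i j => v j (x i)).det := Stmt4Aux.measurable_detmat v hmeas
  have hA : MeasurableSet {x : Fin N → EuclideanSpace ℝ (Fin d) |
      (Matrix.of fun i j => v j (x i)).det = 0} := hdet (measurableSet_singleton 0)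
  have hmap : P.map (fun ω i => X i ω) = Measure.pi (fun _ : Fin N => ρ) := by
    symm
    apply Measure.pi_eq
    intro s hs
    rw [Measure.map_apply hJ (MeasurableSet.univ_pi hs)]
    have hpre : (fun ω (i : Fin N) => X i ω) ⁻¹' Set.pi Set.univ s = ⋂ i, X i ⁻¹' s i := by
      ext ω; simp [Set.mem_pi]
    rw [hpre]
    have h := hXindep.measure_inter_preimage_eq_mul Finset.univ (fun i _ => hs i)
    rw [show (⋂ i, X i ⁻¹' s i) = ⋂ i ∈ Finset.univ, X i ⁻¹' s i by simp, h]
    exact Finset.prod_congr rfl fun i _ => by rw [← hXdist i, Measure.map_apply (hXmeas i) (hs i)]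
  have hset : {ω | (Matrix.of fun i j : Fin N => v j (X i ω)).det = 0}
      = (fun ω (i : Fin N) => X i ω) ⁻¹'
        {x | (Matrix.of fun i j => v j (x i)).det = 0} := rfl
  rw [hset, ← Measure.map_apply hJ hA, hmap]
  have h0 : Measure.pi (fun _ : Fin N => ρ) {y | Stmt4Aux.gram v y = 0} = 0 :=
    Stmt4Aux.gram_null μ ρ hac v hmeas hμZC N le_rfl
  refine measure_mono_null ?_ h0
  intro x hx
  simp only [Set.mem_setOf_eq] at hx ⊢
  show ((Matrix.of fun i j => v j (x i)) * (Matrix.of fun i j => v j (x i))ᵀ).det = 0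
  rw [Matrix.det_mul, hx, zero_mul]
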